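/- There exists a constant C > 0, depending only on the degree bound, such that for every polynomial p with complex coefficients and degree at most k, | ∫_{-∞}^{∞} (e^{−x²/2}/√(2π)) log|p(x)| dx − log M(p) | ≤ C·k, where M(p) is the Mahler measure of p. -/

import Mathlib

open MeasureTheory

/-- The Mahler measure of a complex polynomial `p = a (x - z₁) ⋯ (x - z_k)`:
`M(p) = |a| ∏_{|z_i| > 1} |z_i|`. -/
noncomputable def mahlerMeas (p : Polynomial ℂ) : ℝ :=
  ‖p.leadingCoeff‖ * ((p.roots.map (fun z => max 1 ‖z‖)).prod)

namespace Stmt9Aux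

open Real Set

noncomputable def g (x : ℝ) : ℝ := Real.exp (-x^2/2) / Real.sqrt (2*Real.pi)

lemma sqrt_two_pi_pos : 0 < Real.sqrt (2*Real.pi) :=
  Real.sqrt_pos.2 (by positivity)

lemma one_le_sqrt_two_pi : 1 ≤ Real.sqrt (2*Real.pi) := by
  rw [show (1:ℝ) = Real.sqrt 1 by simp]
  exact Real.sqrt_le_sqrt (by nlinarith [Real.pi_gt_three])

lemma g_nonneg (x : ℝ) : 0 ≤ g x := by
  unfold g; positivity

lemma g_le_one (x : ℝ) : g x ≤ 1 := by
  unfold g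
  rw [div_le_one sqrt_two_pi_pos]
  calc Real.exp (-x^2/2) ≤ 1 := Real.exp_le_one_iff.2 (by nlinarith [sq_nonneg x])
    _ ≤ _ := one_le_sqrt_two_pi

lemma g_cont : Continuous g := by
  unfold g
  exact (Real.continuous_exp.comp (by continuity)).div_const _

lemma g_eq (x : ℝ) : g x = Real.exp (-(1/2) * x^2) * (Real.sqrt (2*Real.pi))⁻¹ := by
  unfold g; rw [div_eq_mul_inv]; ring_nf

lemma integrable_g : Integrable g := by
  have h := (integrable_exp_neg_mul_sq (by norm_num : (0:ℝ) < 1/2)).mul_const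
    ((Real.sqrt (2*Real.pi))⁻¹)
  exact h.congr (by filter_upwards with x using (g_eq x).symm)

lemma integral_g : ∫ x : ℝ, g x = 1 := by
  have h1 : ∫ x : ℝ, Real.exp (-(1/2) * x^2) = Real.sqrt (Real.pi / (1/2)) :=
    integral_gaussian (1/2)
  have : ∫ x : ℝ, g x = (∫ x : ℝ, Real.exp (-(1/2) * x^2)) * (Real.sqrt (2*Real.pi))⁻¹ := by
    rw [← integral_mul_const]
    exact integral_congr_ae (by filter_upwards with x using g_eq x)
  rw [this, h1, show Real.pi / (1/2) = 2 * Real.pi by ring]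
  exact mul_inv_cancel₀ (ne_of_gt sqrt_two_pi_pos)

lemma integrable_g_abs : Integrable (fun x : ℝ => g x * |x|) := by
  have h := (integrable_rpow_mul_exp_neg_mul_sq (by norm_num : (0:ℝ) < 1/2)
    (by norm_num : (-1:ℝ) < 1)).abs.mul_const ((Real.sqrt (2*Real.pi))⁻¹)
  refine h.congr (Filter.Eventually.of_forall fun x => ?_)
  have hx : |x ^ (1:ℝ) * Real.exp (-(1/2) * x ^ 2)| = |x| * Real.exp (-(1/2) * x^2) := by
    rw [abs_mul, Real.rpow_one, abs_of_pos (Real.exp_pos _)]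
  simp only [hx, g_eq]; ring

lemma integrable_g_log1p : Integrable (fun x : ℝ => g x * Real.log (1 + |x|)) := by
  refine integrable_g_abs.mono' ?_ ?_
  · exact (g_cont.measurable.mul (Real.measurable_log.comp
      (measurable_const.add measurable_abs))).aestronglyMeasurable
  · filter_upwards with x
    have h1 : 0 ≤ Real.log (1 + |x|) := Real.log_nonneg (by simp [abs_nonneg])
    have h2 : Real.log (1 + |x|) ≤ |x| := by
      have := Real.log_le_sub_one_of_pos (show (0:ℝ) < 1 + |x| by positivity)
      linarith
    rw [Real.norm_eq_abs, abs_mul, abs_of_nonneg (g_nonneg x), abs_of_nonneg h1]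
    have := g_nonneg x
    calc g x * Real.log (1 + |x|) ≤ g x * |x| := by nlinarith
      _ ≤ g x * |x| := le_refl _

noncomputable def negLog (u : ℝ) : ℝ := max 0 (-Real.log u)

lemma negLog_nonneg (u : ℝ) : 0 ≤ negLog u := le_max_left _ _

lemma negLog_of_one_le {u : ℝ} (h : 1 ≤ u) : negLog u = 0 := by
  unfold negLog
  rw [max_eq_left]
  simpa using Real.log_nonneg h

lemma negLog_anti {a b : ℝ} (ha : 0 < a) (hab : a ≤ b) : negLog b ≤ negLog a := by
  unfold negLog
  exact max_le_max (le_refl 0) (neg_le_neg (Real.log_le_log ha hab))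

lemma log_max_one {u : ℝ} (hu : 0 < u) : Real.log (max 1 u) = Real.log u + negLog u := by
  rcases le_or_gt 1 u with h | h
  · rw [max_eq_right h, negLog_of_one_le h, add_zero]
  · rw [max_eq_left h.le]
    unfold negLog
    rw [max_eq_right]
    · ring_nf; simp
    · simpa using (Real.log_nonpos hu.le h.le)

noncomputable def F (u : ℝ) : ℝ :=
  Set.indicator (Set.Ioo (-1:ℝ) 1) (fun u => |u| ^ (-(1/2):ℝ)) u

lemma F_nonneg (u : ℝ) : 0 ≤ F u := by
  unfold F
  apply Set.indicator_nonneg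
  intro x _
  positivity

lemma abs_rpow_half (u : ℝ) :
    |u| ^ (-(1/2):ℝ) = u ^ (-(1/2):ℝ) + (-u) ^ (-(1/2):ℝ) := by
  rcases lt_trichotomy u 0 with h | h | h
  · have h1 : u ^ (-(1/2):ℝ) = 0 := by
      rw [Real.rpow_def_of_neg h]
      have : Real.cos (-(1/2) * Real.pi) = 0 := by
        rw [show -(1/2) * Real.pi = -(Real.pi/2) by ring, Real.cos_neg, Real.cos_pi_div_two]
      rw [this, mul_zero]
    rw [h1, zero_add, abs_of_neg h]
  · simp [h, Real.zero_rpow (by norm_num : (-(1/2):ℝ) ≠ 0)]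
  · have h1 : (-u) ^ (-(1/2):ℝ) = 0 := by
      rw [Real.rpow_def_of_neg (by linarith)]
      have : Real.cos (-(1/2) * Real.pi) = 0 := by
        rw [show -(1/2) * Real.pi = -(Real.pi/2) by ring, Real.cos_neg, Real.cos_pi_div_two]
      rw [this, mul_zero]
    rw [h1, add_zero, abs_of_pos h]

lemma integrable_F : Integrable F := by
  have h1 : IntervalIntegrable (fun u : ℝ => u ^ (-(1/2):ℝ)) volume (-1) 1 :=
    intervalIntegral.intervalIntegrable_rpow' (by norm_num)
  have h2 : IntervalIntegrable (fun u : ℝ => (-u) ^ (-(1/2):ℝ)) volume (-1) 1 := by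
    have := (IntervalIntegrable.iff_comp_neg (f := fun u : ℝ => u ^ (-(1/2):ℝ)) (a := 1) (b := -1)).mp
      (intervalIntegral.intervalIntegrable_rpow'
        (by norm_num : (-1:ℝ) < -(1/2)) (a := 1) (b := -1))
    simpa using this
  have h1on : IntegrableOn (fun u : ℝ => u ^ (-(1/2):ℝ)) (Set.Ioo (-1:ℝ) 1) :=
    (intervalIntegrable_iff_integrableOn_Ioo_of_le (by norm_num : (-1:ℝ) ≤ 1)).1 h1
  have h2on : IntegrableOn (fun u : ℝ => (-u) ^ (-(1/2):ℝ)) (Set.Ioo (-1:ℝ) 1) :=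
    (intervalIntegrable_iff_integrableOn_Ioo_of_le (by norm_num : (-1:ℝ) ≤ 1)).1 h2
  have h4 : IntegrableOn (fun u : ℝ => |u| ^ (-(1/2):ℝ)) (Set.Ioo (-1:ℝ) 1) :=
    (h1on.add h2on).congr (Filter.Eventually.of_forall fun x => (abs_rpow_half x).symm)
  exact h4.integrable_indicator measurableSet_Ioo

lemma negLog_le_F (u : ℝ) : negLog |u| ≤ 2 * F u := by
  unfold F
  rcases le_or_gt 1 |u| with h | h
  · rw [negLog_of_one_le h, Set.indicator_of_notMem]
    · simp
    · intro hmem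
      rw [Set.mem_Ioo] at hmem
      rcases abs_lt.2 hmem with _
      · exact absurd (abs_lt.2 hmem) (not_lt.2 h)
  · have hmem : u ∈ Set.Ioo (-1:ℝ) 1 := by
      rw [Set.mem_Ioo, ← abs_lt]; exact h
    rw [Set.indicator_of_mem hmem]
    rcases eq_or_lt_of_le (abs_nonneg u) with h0 | h0
    · rw [← h0]
      simp [negLog, Real.log_zero, Real.zero_rpow (by norm_num : (-(1/2):ℝ) ≠ 0)]
    · have hlog : Real.log (|u| ^ (-(1/2):ℝ)) = -(1/2) * Real.log |u| :=
        Real.log_rpow h0 _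
      have hle : Real.log (|u| ^ (-(1/2):ℝ)) ≤ |u| ^ (-(1/2):ℝ) - 1 :=
        Real.log_le_sub_one_of_pos (Real.rpow_pos_of_pos h0 _)
      have hneg : -Real.log |u| ≤ 2 * |u| ^ (-(1/2):ℝ) := by
        nlinarith [Real.rpow_pos_of_pos h0 (-(1/2):ℝ)]
      unfold negLog
      rw [max_le_iff]
      constructor
      · positivity
      · exact hneg

lemma measurable_negLog_abs_sub (t : ℝ) : Measurable (fun x : ℝ => negLog |x - t|) := by
  unfold negLog
  exact measurable_const.max
    (Real.measurable_log.comp ((measurable_id.sub measurable_const).abs)).neg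

lemma g_negLog_le (t : ℝ) (x : ℝ) : g x * negLog |x - t| ≤ 2 * F (x - t) := by
  calc g x * negLog |x - t| ≤ 1 * negLog |x - t| :=
        mul_le_mul_of_nonneg_right (g_le_one x) (negLog_nonneg _)
    _ = negLog |x - t| := one_mul _
    _ ≤ 2 * F (x - t) := negLog_le_F _

lemma integrable_F_sub (t : ℝ) : Integrable (fun x : ℝ => F (x - t)) :=
  integrable_F.comp_sub_right t

lemma integrable_g_negLog (t : ℝ) : Integrable (fun x : ℝ => g x * negLog |x - t|) := by
  refine ((integrable_F_sub t).const_mul 2).mono'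
    ((g_cont.measurable.mul (measurable_negLog_abs_sub t)).aestronglyMeasurable) ?_
  filter_upwards with x
  rw [Real.norm_eq_abs, abs_of_nonneg (mul_nonneg (g_nonneg x) (negLog_nonneg _))]
  exact g_negLog_le t x

lemma integral_g_negLog_le (t : ℝ) :
    ∫ x : ℝ, g x * negLog |x - t| ≤ 2 * ∫ x : ℝ, F x := by
  have h1 : ∫ x : ℝ, g x * negLog |x - t| ≤ ∫ x : ℝ, 2 * F (x - t) :=
    integral_mono (integrable_g_negLog t) ((integrable_F_sub t).const_mul 2) (g_negLog_le t)
  have h2 : ∫ x : ℝ, 2 * F (x - t) = 2 * ∫ x : ℝ, F (x - t) := integral_const_mul 2 _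
  have h3 : ∫ x : ℝ, F (x - t) = ∫ x : ℝ, F x := integral_sub_right_eq_self F t
  linarith

noncomputable def K : ℝ :=
  (∫ x : ℝ, g x * Real.log (1 + |x|)) + Real.log 2 + 2 * ∫ x : ℝ, F x

lemma K_nonneg : 0 ≤ K := by
  have h1 : 0 ≤ ∫ x : ℝ, g x * Real.log (1 + |x|) :=
    integral_nonneg fun x => mul_nonneg (g_nonneg x)
      (Real.log_nonneg (by simp [abs_nonneg]))
  have h2 : 0 ≤ ∫ x : ℝ, F x := integral_nonneg F_nonneg
  have h3 : 0 ≤ Real.log 2 := Real.log_nonneg (by norm_num)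
  unfold K; linarith

lemma cabs_sub_le (a b : ℂ) : ‖a - b‖ ≤ ‖a‖ + ‖b‖ := by
  simpa using norm_sub_le a b

lemma pointwise_ub (z : ℂ) (x : ℝ) :
    Real.log (‖(x:ℂ) - z‖) ≤
      Real.log (max 1 (‖z‖)) + Real.log (1 + |x|) := by
  set m := max 1 (‖z‖) with hm
  have hm1 : (1:ℝ) ≤ m := le_max_left _ _
  have hx1 : (1:ℝ) ≤ 1 + |x| := by simp [abs_nonneg]
  have hrhs : Real.log m + Real.log (1 + |x|) = Real.log (m * (1 + |x|)) :=
    (Real.log_mul (by linarith) (by linarith)).symm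
  rw [hrhs]
  rcases eq_or_lt_of_le (norm_nonneg ((x:ℂ) - z)) with h0 | h0
  · rw [← h0, Real.log_zero]
    exact Real.log_nonneg (by nlinarith)
  · apply Real.log_le_log h0
    calc ‖(x:ℂ) - z‖ ≤ ‖(x:ℂ)‖ + ‖z‖ :=
          cabs_sub_le _ _
      _ = |x| + ‖z‖ := by rw [Complex.norm_real, Real.norm_eq_abs]
      _ ≤ m * (1 + |x|) := by
          have : ‖z‖ ≤ m := le_max_right _ _
          nlinarith [abs_nonneg x]

lemma pointwise_lb (z : ℂ) (x : ℝ) (hx : x ≠ z.re) :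
    Real.log (max 1 (‖z‖)) -
        (Real.log (1 + |x|) + Real.log 2 + negLog |x - z.re|) ≤
      Real.log (‖(x:ℂ) - z‖) := by
  set d := ‖(x:ℂ) - z‖ with hd
  have hret : ((x:ℂ) - z).re = x - z.re := by simp
  have habs : |x - z.re| ≤ d := by
    rw [← hret]
    exact Complex.abs_re_le_norm _
  have ht0 : 0 < |x - z.re| := abs_pos.2 (sub_ne_zero.2 hx)
  have hd0 : 0 < d := lt_of_lt_of_le ht0 habs
  have hnl : negLog d ≤ negLog |x - z.re| := negLog_anti ht0 habs
  have hx1 : (1:ℝ) ≤ 1 + |x| := by simp [abs_nonneg]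
  have key : Real.log (max 1 (‖z‖)) ≤
      Real.log d + negLog d + Real.log (1 + |x|) + Real.log 2 := by
    rcases le_or_gt (‖z‖) 1 with h | h
    · rw [max_eq_left h]
      have h1 : 0 ≤ Real.log d + negLog d := by
        have := log_max_one hd0
        rw [← this]
        exact Real.log_nonneg (le_max_left _ _)
      have h2 : 0 ≤ Real.log (1 + |x|) := Real.log_nonneg hx1
      have h3 : 0 ≤ Real.log 2 := Real.log_nonneg (by norm_num)
      simp only [Real.log_one]
      linarith
    · rw [max_eq_right h.le]
      have hz1 : ‖z‖ ≤ d + |x| := by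
        calc ‖z‖ = ‖(x:ℂ) - ((x:ℂ) - z)‖ := by ring_nf
          _ ≤ ‖(x:ℂ)‖ + ‖(x:ℂ) - z‖ := cabs_sub_le _ _
          _ = |x| + d := by rw [Complex.norm_real, Real.norm_eq_abs]
          _ = d + |x| := by ring
      have hmax : (1:ℝ) ≤ max 1 d := le_max_left _ _
      have hdle : d ≤ max 1 d := le_max_right _ _
      have hz2 : ‖z‖ ≤ 2 * ((1 + |x|) * max 1 d) := by
        have hx0 : |x| ≤ (1 + |x|) * max 1 d := by nlinarith [abs_nonneg x]
        have hd1 : d ≤ (1 + |x|) * max 1 d := by nlinarith [abs_nonneg x, hd0.le]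
        linarith
      have hlog : Real.log (‖z‖) ≤
          Real.log 2 + Real.log (1 + |x|) + Real.log (max 1 d) := by
        calc Real.log (‖z‖) ≤ Real.log (2 * ((1 + |x|) * max 1 d)) :=
              Real.log_le_log (by linarith) hz2
          _ = Real.log 2 + Real.log ((1 + |x|) * max 1 d) := by
              rw [Real.log_mul (by norm_num) (by positivity)]
          _ = Real.log 2 + (Real.log (1 + |x|) + Real.log (max 1 d)) := by
              rw [Real.log_mul (by linarith) (by positivity)]
          _ = _ := by ring
      rw [log_max_one hd0] at hlog
      linarith
  linarith

lemma measurable_log_abs_sub (z : ℂ) :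
    Measurable (fun x : ℝ => Real.log (‖(x:ℂ) - z‖)) := by
  apply Real.measurable_log.comp
  exact (continuous_norm.comp
    ((Complex.continuous_ofReal.sub continuous_const))).measurable

lemma pointwise_abs_bound (z : ℂ) (x : ℝ) (hx : x ≠ z.re) :
    |Real.log (‖(x:ℂ) - z‖) - Real.log (max 1 (‖z‖))| ≤
      Real.log (1 + |x|) + Real.log 2 + negLog |x - z.re| := by
  have h1 := pointwise_ub z x
  have h2 := pointwise_lb z x hx
  have h3 : 0 ≤ Real.log 2 := Real.log_nonneg (by norm_num)
  have h4 := negLog_nonneg |x - z.re|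
  rw [abs_le]
  constructor <;> linarith

lemma ae_ne (t : ℝ) : ∀ᵐ x : ℝ, x ≠ t := by
  have : volume ({t} : Set ℝ) = 0 := measure_singleton t
  filter_upwards [measure_eq_zero_iff_ae_notMem.1 this] with x hx
  simpa using hx

lemma integrable_root (z : ℂ) :
    Integrable (fun x : ℝ => g x * Real.log (‖(x:ℂ) - z‖)) := by
  set m := max 1 (‖z‖) with hm
  have hbd : Integrable (fun x : ℝ =>
      g x * |Real.log m| + (g x * Real.log (1 + |x|) + g x * Real.log 2
        + g x * negLog |x - z.re|)) := by
    exact ((integrable_g.mul_const _).add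
      ((integrable_g_log1p.add (integrable_g.mul_const _)).add
        (integrable_g_negLog z.re)))
  refine hbd.mono'
    ((g_cont.measurable.mul (measurable_log_abs_sub z)).aestronglyMeasurable) ?_
  filter_upwards [ae_ne z.re] with x hx
  have hb := pointwise_abs_bound z x hx
  have hg := g_nonneg x
  have h1 : |Real.log (‖(x:ℂ) - z‖)| ≤
      |Real.log m| + (Real.log (1 + |x|) + Real.log 2 + negLog |x - z.re|) := by
    have := abs_sub_abs_le_abs_sub (Real.log (‖(x:ℂ) - z‖)) (Real.log m)
    have habs : |Real.log (‖(x:ℂ) - z‖) - Real.log m| ≤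
        Real.log (1 + |x|) + Real.log 2 + negLog |x - z.re| := hb
    linarith
  rw [Real.norm_eq_abs, abs_mul, abs_of_nonneg hg]
  calc g x * |Real.log (‖(x:ℂ) - z‖)| ≤
      g x * (|Real.log m| + (Real.log (1 + |x|) + Real.log 2 + negLog |x - z.re|)) :=
        mul_le_mul_of_nonneg_left h1 hg
    _ = g x * |Real.log m| + (g x * Real.log (1 + |x|) + g x * Real.log 2
        + g x * negLog |x - z.re|) := by ring

lemma root_bound (z : ℂ) :
    |(∫ x : ℝ, g x * Real.log (‖(x:ℂ) - z‖)) -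
        Real.log (max 1 (‖z‖))| ≤ K := by
  set m := max 1 (‖z‖) with hm
  have hconst : ∫ x : ℝ, g x * Real.log m = Real.log m := by
    rw [integral_mul_const, integral_g, one_mul]
  have hsub : (∫ x : ℝ, g x * Real.log (‖(x:ℂ) - z‖)) - Real.log m =
      ∫ x : ℝ, (g x * Real.log (‖(x:ℂ) - z‖) - g x * Real.log m) := by
    rw [integral_sub (integrable_root z) (integrable_g.mul_const _), hconst]
  rw [hsub]
  have hB : Integrable (fun x : ℝ => g x * Real.log (1 + |x|) + g x * Real.log 2
      + g x * negLog |x - z.re|) :=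
    (integrable_g_log1p.add (integrable_g.mul_const _)).add (integrable_g_negLog z.re)
  have habs : |∫ x : ℝ, (g x * Real.log (‖(x:ℂ) - z‖) - g x * Real.log m)| ≤
      ∫ x : ℝ, (g x * Real.log (1 + |x|) + g x * Real.log 2 + g x * negLog |x - z.re|) := by
    rw [← Real.norm_eq_abs]
    apply norm_integral_le_of_norm_le hB
    filter_upwards [ae_ne z.re] with x hx
    have hb := pointwise_abs_bound z x hx
    have hg := g_nonneg x
    rw [Real.norm_eq_abs, ← mul_sub, abs_mul, abs_of_nonneg hg]
    calc g x * |Real.log (‖(x:ℂ) - z‖) - Real.log m| ≤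
        g x * (Real.log (1 + |x|) + Real.log 2 + negLog |x - z.re|) :=
          mul_le_mul_of_nonneg_left hb hg
      _ = g x * Real.log (1 + |x|) + g x * Real.log 2 + g x * negLog |x - z.re| := by ring
  have hsplit : ∫ x : ℝ, (g x * Real.log (1 + |x|) + g x * Real.log 2
      + g x * negLog |x - z.re|) = (∫ x : ℝ, g x * Real.log (1 + |x|))
      + Real.log 2 + ∫ x : ℝ, g x * negLog |x - z.re| := by
    have hC : Integrable (fun x : ℝ => g x * Real.log 2) := integrable_g.mul_const _
    have hA : Integrable (fun x : ℝ => g x * Real.log (1 + |x|) + g x * Real.log 2) :=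
      integrable_g_log1p.add hC
    rw [integral_add hA (integrable_g_negLog z.re), integral_add integrable_g_log1p hC]
    rw [integral_mul_const, integral_g, one_mul]
  have hK := integral_g_negLog_le z.re
  unfold K
  rw [hsplit] at habs
  linarith

lemma ms_integral (G : ℂ → ℝ → ℝ) (s : Multiset ℂ) (h : ∀ z ∈ s, Integrable (G z)) :
    Integrable (fun x => (s.map (fun z => G z x)).sum) ∧
    (∫ x : ℝ, (s.map (fun z => G z x)).sum) = (s.map (fun z => ∫ x : ℝ, G z x)).sum := by
  induction s using Multiset.induction_on with
  | empty => simp [integrable_const (0:ℝ)]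
  | cons a s ih =>
    have ha : Integrable (G a) := h a (Multiset.mem_cons_self a s)
    have hs : ∀ z ∈ s, Integrable (G z) := fun z hz => h z (Multiset.mem_cons_of_mem hz)
    obtain ⟨ih1, ih2⟩ := ih hs
    have hadd : Integrable (fun x => G a x + (s.map (fun z => G z x)).sum) := ha.add ih1
    constructor
    · simpa [Multiset.map_cons, Multiset.sum_cons] using hadd
    · simp only [Multiset.map_cons, Multiset.sum_cons]
      rw [integral_add ha ih1, ih2]

lemma ms_abs_sum_le (f : ℂ → ℝ) (K' : ℝ) (s : Multiset ℂ) (h : ∀ z ∈ s, |f z| ≤ K') :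
    |(s.map f).sum| ≤ K' * s.card := by
  induction s using Multiset.induction_on with
  | empty => simp
  | cons a s ih =>
    have ha := h a (Multiset.mem_cons_self a s)
    have hs := ih (fun z hz => h z (Multiset.mem_cons_of_mem hz))
    simp only [Multiset.map_cons, Multiset.sum_cons, Multiset.card_cons]
    push_cast
    calc |f a + (s.map f).sum| ≤ |f a| + |(s.map f).sum| := abs_add_le _ _
      _ ≤ K' * (s.card : ℝ) + K' := by linarith
      _ = K' * ((s.card : ℝ) + 1) := by ring

lemma ms_log_prod (f : ℂ → ℝ) (s : Multiset ℂ) (h : ∀ z ∈ s, 0 < f z) :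
    Real.log ((s.map f).prod) = (s.map (fun z => Real.log (f z))).sum := by
  induction s using Multiset.induction_on with
  | empty => simp
  | cons a s ih =>
    have ha := h a (Multiset.mem_cons_self a s)
    have hs : ∀ z ∈ s, 0 < f z := fun z hz => h z (Multiset.mem_cons_of_mem hz)
    have hprod : 0 < (s.map f).prod := by
      apply Multiset.prod_pos
      intro y hy
      obtain ⟨z, hz, rfl⟩ := Multiset.mem_map.1 hy
      exact hs z hz
    simp only [Multiset.map_cons, Multiset.prod_cons, Multiset.sum_cons]
    rw [Real.log_mul (ne_of_gt ha) (ne_of_gt hprod), ih hs]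

lemma ms_sum_sub (f h : ℂ → ℝ) (s : Multiset ℂ) :
    (s.map f).sum - (s.map h).sum = (s.map (fun z => f z - h z)).sum := by
  induction s using Multiset.induction_on with
  | empty => simp
  | cons a s ih =>
    simp only [Multiset.map_cons, Multiset.sum_cons]
    rw [← ih]; ring

end Stmt9Aux

open Stmt9Aux in
theorem stmt9 :
    ∃ C : ℝ, 0 < C ∧ ∀ (k : ℕ) (p : Polynomial ℂ), p ≠ 0 → p.natDegree ≤ k →
      |(∫ x : ℝ, (Real.exp (-x ^ 2 / 2) / Real.sqrt (2 * Real.pi)) *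
          Real.log (‖p.eval (x : ℂ)‖)) -
        Real.log (mahlerMeas p)| ≤ C * k := by
  classical
  refine ⟨K + 1, by have := K_nonneg; linarith, ?_⟩
  intro k p hp hk
  set s := p.roots with hs
  set a := p.leadingCoeff with haa
  have ha : a ≠ 0 := Polynomial.leadingCoeff_ne_zero.2 hp
  have ha' : ‖a‖ ≠ 0 := by simpa using ha
  have hfac : p = Polynomial.C a * (s.map fun z => Polynomial.X - Polynomial.C z).prod :=
    (Polynomial.C_leadingCoeff_mul_prod_multiset_X_sub_C IsAlgClosed.card_roots_eq_natDegree).symm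
  have heval : ∀ x : ℝ, ‖p.eval (x:ℂ)‖ =
      ‖a‖ * (s.map fun z => ‖(x:ℂ) - z‖).prod := by
    intro x
    conv_lhs => rw [hfac]
    rw [Polynomial.eval_mul, Polynomial.eval_C, norm_mul]
    congr 1
    rw [Polynomial.eval_multiset_prod, Multiset.map_map, show ∀ m : Multiset ℂ, ‖m.prod‖ = (m.map (‖·‖)).prod from fun m => map_multiset_prod (normHom : ℂ →*₀ ℝ) m, Multiset.map_map]
    congr 1
    simp [Function.comp_def]
  have hae : ∀ᵐ x : ℝ, ∀ z ∈ s, (x:ℂ) ≠ z := by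
    have hfin : Set.Finite {x : ℝ | ∃ z ∈ s, (x:ℂ) = z} := by
      apply Set.Finite.subset ((s.toFinset.finite_toSet).image Complex.re)
      rintro x ⟨z, hz, hxz⟩
      exact ⟨z, by simpa using hz, by rw [← hxz]; simp⟩
    have h0 : volume {x : ℝ | ∃ z ∈ s, (x:ℂ) = z} = 0 := hfin.measure_zero _
    filter_upwards [measure_eq_zero_iff_ae_notMem.1 h0] with x hx z hz hxz
    exact hx ⟨z, hz, hxz⟩
  have hlog : ∀ᵐ x : ℝ, g x * Real.log (‖p.eval (x:ℂ)‖) =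
      g x * Real.log (‖a‖) +
      (s.map (fun z => g x * Real.log (‖(x:ℂ) - z‖))).sum := by
    filter_upwards [hae] with x hx
    have hposf : ∀ z ∈ s, 0 < ‖(x:ℂ) - z‖ := by
      intro z hz
      exact norm_pos_iff.2 (sub_ne_zero.2 (hx z hz))
    have hpos : ∀ y ∈ s.map (fun z => ‖(x:ℂ) - z‖), 0 < y := by
      intro y hy
      obtain ⟨z, hz, rfl⟩ := Multiset.mem_map.1 hy
      exact hposf z hz
    have hprod : 0 < (s.map fun z => ‖(x:ℂ) - z‖).prod := Multiset.prod_pos hpos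
    rw [heval x, Real.log_mul ha' (ne_of_gt hprod), ms_log_prod _ _ hposf, mul_add]
    congr 1
    exact (Multiset.sum_map_mul_left).symm
  have hint : ∀ z ∈ s, Integrable (fun x : ℝ => g x * Real.log (‖(x:ℂ) - z‖)) :=
    fun z _ => integrable_root z
  obtain ⟨hsumInt, hsumEq⟩ :=
    ms_integral (fun z x => g x * Real.log (‖(x:ℂ) - z‖)) s hint
  have hI : (∫ x : ℝ, g x * Real.log (‖p.eval (x:ℂ)‖)) =
      Real.log (‖a‖) +
      (s.map (fun z => ∫ x : ℝ, g x * Real.log (‖(x:ℂ) - z‖))).sum := by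
    rw [integral_congr_ae hlog, integral_add (integrable_g.mul_const _) hsumInt,
      integral_mul_const, integral_g, one_mul, hsumEq]
  have hM : Real.log (mahlerMeas p) = Real.log (‖a‖) +
      (s.map (fun z => Real.log (max 1 (‖z‖)))).sum := by
    unfold mahlerMeas
    have hposf : ∀ z ∈ s, (0:ℝ) < max 1 (‖z‖) :=
      fun z _ => lt_of_lt_of_le one_pos (le_max_left _ _)
    have hpos : ∀ y ∈ s.map (fun z => max 1 (‖z‖)), (0:ℝ) < y := by
      intro y hy
      obtain ⟨z, hz, rfl⟩ := Multiset.mem_map.1 hy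
      exact hposf z hz
    rw [Real.log_mul ha' (ne_of_gt (Multiset.prod_pos hpos)), ms_log_prod _ _ hposf]
  have hdiff : (∫ x : ℝ, g x * Real.log (‖p.eval (x:ℂ)‖)) -
      Real.log (mahlerMeas p) =
      (s.map (fun z => (∫ x : ℝ, g x * Real.log (‖(x:ℂ) - z‖)) -
        Real.log (max 1 (‖z‖)))).sum := by
    rw [hI, hM, ← ms_sum_sub]
    ring
  have hb : |(s.map (fun z => (∫ x : ℝ, g x * Real.log (‖(x:ℂ) - z‖)) -
      Real.log (max 1 (‖z‖)))).sum| ≤ K * s.card :=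
    ms_abs_sum_le _ _ s (fun z _ => root_bound z)
  have hcard : (s.card : ℝ) ≤ (k:ℝ) := by
    exact_mod_cast (p.card_roots').trans hk
  have hgoal : (∫ x : ℝ, (Real.exp (-x ^ 2 / 2) / Real.sqrt (2 * Real.pi)) *
      Real.log (‖p.eval (x : ℂ)‖)) =
      ∫ x : ℝ, g x * Real.log (‖p.eval (x:ℂ)‖) := rfl
  rw [hgoal, hdiff]
  have hK := K_nonneg
  calc |(s.map (fun z => (∫ x : ℝ, g x * Real.log (‖(x:ℂ) - z‖)) -
      Real.log (max 1 (‖z‖)))).sum| ≤ K * s.card := hb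
    _ ≤ K * k := by
        apply mul_le_mul_of_nonneg_left hcard hK
    _ ≤ (K + 1) * k := by
        have : (0:ℝ) ≤ (k:ℝ) := Nat.cast_nonneg k
        nlinarith
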